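/- Let H be a finite-dimensional complex Hilbert space and let A_x = |φ_x⟩⟨φ_x| (x ∈ Ω_A) and B_y = |ψ_y⟩⟨ψ_y| (y ∈ Ω_B) be atomic observables on H, where the φ_x and ψ_y are unit vectors and ∑_x A_x = 1 = ∑_y B_y. For each state ρ set λ_{xy}(ρ) = |⟨φ_x, ψ_y⟩|² ⟨φ_x, ρ φ_x⟩. Then λ_{xy}(ρ) ∈ [0,1], ∑_{x,y} λ_{xy}(ρ) = 1, and for all (x,y): (A_x ∘ B_y)^{1/2} ρ (A_x ∘ B_y)^{1/2} = λ_{xy}(ρ) A_x and B_y A_x ρ A_x B_y = λ_{xy}(ρ) B_y. -/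

import Mathlib

open Matrix ComplexOrder

/-- The square root of a positive semidefinite matrix, as `Matrix.PosSemidef.sqrt` was defined
in the older Mathlib (it has since been removed). -/
noncomputable def Matrix.PosSemidef.sqrt {n : Type*} [Fintype n] [DecidableEq n]
    {𝕜 : Type*} [RCLike 𝕜] {A : Matrix n n 𝕜} (hA : A.PosSemidef) : Matrix n n 𝕜 :=
  hA.1.eigenvectorUnitary.1 * diagonal ((↑) ∘ (√·) ∘ hA.1.eigenvalues) *
    (star hA.1.eigenvectorUnitary : Matrix n n 𝕜)

theorem Matrix.PosSemidef.sqrt_conjTranspose {n : Type*} [Fintype n] [DecidableEq n]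
    {𝕜 : Type*} [RCLike 𝕜] {A : Matrix n n 𝕜} (hA : A.PosSemidef) : hA.sqrtᴴ = hA.sqrt := by
  unfold Matrix.PosSemidef.sqrt
  rw [conjTranspose_mul, conjTranspose_mul, diagonal_conjTranspose]
  simp only [Matrix.star_eq_conjTranspose, conjTranspose_conjTranspose, Matrix.mul_assoc]
  congr 3
  funext i
  simp

/-- The sequential product `a ∘ b = a^{1/2} b a^{1/2}` of effects, where `a^{1/2}` is the
unique positive semidefinite square root of `a`. -/
noncomputable def seqProd {n : Type*} [Fintype n] [DecidableEq n]
    {a : Matrix n n ℂ} (ha : a.PosSemidef) (b : Matrix n n ℂ) : Matrix n n ℂ :=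
  ha.sqrt * b * ha.sqrt

theorem seqProd_posSemidef {n : Type*} [Fintype n] [DecidableEq n]
    {a : Matrix n n ℂ} (ha : a.PosSemidef) {b : Matrix n n ℂ} (hb : b.PosSemidef) :
    (seqProd ha b).PosSemidef := by
  have h := hb.mul_mul_conjTranspose_same ha.sqrt
  rwa [ha.sqrt_conjTranspose] at h

theorem vecMulVec_star_self_posSemidef {n : Type*} [Fintype n] (v : n → ℂ) :
    (Matrix.vecMulVec v (star v)).PosSemidef := by
  rw [Matrix.vecMulVec_eq Unit]
  have h : Matrix.replicateRow Unit (star v) = (Matrix.replicateCol Unit v)ᴴ := by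
    ext i j
    simp [Matrix.replicateRow, Matrix.replicateCol]
  rw [h]
  exact Matrix.posSemidef_self_mul_conjTranspose _

theorem Matrix.PosSemidef.eq_sqrt_of_sq_eq {n : Type*} [Fintype n] [DecidableEq n]
    {A B : Matrix n n ℂ} (hB : B.PosSemidef) (hA : A.PosSemidef) (h : B ^ 2 = A) :
    B = hA.sqrt := by
  have h1 : hA.sqrt = cfc Real.sqrt A := by
    rw [hA.1.cfc_eq, IsHermitian.cfc, Unitary.conjStarAlgAut_apply]; rfl
  have hBsa : IsSelfAdjoint B := hB.1
  have h2 : A = cfc (fun x : ℝ => x ^ 2) B := by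
    rw [cfc_pow_id B 2 hBsa, h]
  rw [h1, h2, ← cfc_comp Real.sqrt (fun x : ℝ => x ^ 2) B]
  conv_lhs => rw [← cfc_id ℝ B]
  refine cfc_congr fun x hx => ?_
  have : 0 ≤ x := by
    rw [hB.1.spectrum_real_eq_range_eigenvalues] at hx
    obtain ⟨i, rfl⟩ := hx
    exact hB.eigenvalues_nonneg i
  simp [Real.sqrt_sq this]

section Helpers

variable {n : Type*} [Fintype n]

lemma vmv_mul_vmv (u v w z : n → ℂ) :
    Matrix.vecMulVec u v * Matrix.vecMulVec w z = (v ⬝ᵥ w) • Matrix.vecMulVec u z := by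
  ext i j
  simp only [Matrix.mul_apply, Matrix.vecMulVec_apply, Matrix.smul_apply, dotProduct,
    smul_eq_mul, Finset.sum_mul]
  exact Finset.sum_congr rfl fun k _ => by ring

lemma vmv_mul_right (u v : n → ℂ) (M : Matrix n n ℂ) :
    Matrix.vecMulVec u v * M = Matrix.vecMulVec u (v ᵥ* M) := by
  ext i j
  simp only [Matrix.mul_apply, Matrix.vecMulVec_apply, Matrix.vecMul, dotProduct,
    Finset.mul_sum]
  exact Finset.sum_congr rfl fun k _ => by ring

lemma trace_vmv (u v : n → ℂ) : (Matrix.vecMulVec u v).trace = v ⬝ᵥ u := by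
  simp [Matrix.trace, Matrix.diag, Matrix.vecMulVec_apply, dotProduct, mul_comm]

lemma trace_vmv_mul (u v : n → ℂ) (M : Matrix n n ℂ) :
    (Matrix.vecMulVec u v * M).trace = v ⬝ᵥ M *ᵥ u := by
  rw [vmv_mul_right, trace_vmv, ← Matrix.dotProduct_mulVec]

lemma vmv_mul_mat_mul_vmv (u v w z : n → ℂ) (M : Matrix n n ℂ) :
    Matrix.vecMulVec u v * M * Matrix.vecMulVec w z = (v ⬝ᵥ M *ᵥ w) • Matrix.vecMulVec u z := by
  rw [vmv_mul_right, vmv_mul_vmv, Matrix.dotProduct_mulVec]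

lemma psd_real_smul [DecidableEq n] {A : Matrix n n ℂ} (hA : A.PosSemidef) {r : ℝ} (hr : 0 ≤ r) :
    ((r : ℂ) • A).PosSemidef := by
  refine .of_dotProduct_mulVec_nonneg ?_ fun x => ?_
  · have : star (r : ℂ) = (r : ℂ) := by
      simp [Complex.star_def, Complex.conj_ofReal]
    unfold Matrix.IsHermitian
    rw [Matrix.conjTranspose_smul, hA.1.eq, this]
  · rw [Matrix.smul_mulVec, dotProduct_smul, smul_eq_mul]
    exact mul_nonneg (Complex.zero_le_real.2 hr) (hA.dotProduct_mulVec_nonneg x)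

lemma sqrt_proj [DecidableEq n] (φ : n → ℂ) (h : star φ ⬝ᵥ φ = 1) :
    (vecMulVec_star_self_posSemidef φ).sqrt = Matrix.vecMulVec φ (star φ) := by
  symm
  refine (vecMulVec_star_self_posSemidef φ).eq_sqrt_of_sq_eq
    (vecMulVec_star_self_posSemidef φ) ?_
  rw [pow_two, vmv_mul_vmv, h, one_smul]

end Helpers

/-- For atomic observables `A_x = |φ_x⟩⟨φ_x|`, `B_y = |ψ_y⟩⟨ψ_y|` and a state
`ρ`, with `λ_{xy}(ρ) = |⟨φ_x, ψ_y⟩|² ⟨φ_x, ρ φ_x⟩`, one has `λ_{xy}(ρ) ∈ [0,1]`,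
`∑_{x,y} λ_{xy}(ρ) = 1`, `L^{A∘B}_{(x,y)}(ρ) = λ_{xy}(ρ) A_x` and
`(L^A ∘ L^B)_{(x,y)}(ρ) = λ_{xy}(ρ) B_y`. -/
theorem stmt_6 {n : Type*} [Fintype n] [DecidableEq n]
    {ΩA ΩB : Type*} [Fintype ΩA] [Fintype ΩB]
    (φ : ΩA → n → ℂ) (ψ : ΩB → n → ℂ)
    (hφ : ∀ x, star (φ x) ⬝ᵥ φ x = 1) (hψ : ∀ y, star (ψ y) ⬝ᵥ ψ y = 1)
    (hAsum : ∑ x, Matrix.vecMulVec (φ x) (star (φ x)) = 1)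
    (hBsum : ∑ y, Matrix.vecMulVec (ψ y) (star (ψ y)) = 1)
    (ρ : Matrix n n ℂ) (hρ : ρ.PosSemidef) (hρtr : ρ.trace = 1)
    (lam : ΩA → ΩB → ℂ)
    (hlam : ∀ x y, lam x y
      = (↑(‖star (φ x) ⬝ᵥ ψ y‖ ^ 2) : ℂ) * (star (φ x) ⬝ᵥ (ρ *ᵥ φ x))) :
    (∀ x y, 0 ≤ (lam x y).re ∧ (lam x y).re ≤ 1 ∧ (lam x y).im = 0) ∧
    (∑ x, ∑ y, lam x y = 1) ∧
    (∀ x y,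
      (seqProd_posSemidef (vecMulVec_star_self_posSemidef (φ x))
          (vecMulVec_star_self_posSemidef (ψ y))).sqrt * ρ *
        (seqProd_posSemidef (vecMulVec_star_self_posSemidef (φ x))
          (vecMulVec_star_self_posSemidef (ψ y))).sqrt
      = lam x y • Matrix.vecMulVec (φ x) (star (φ x))) ∧
    (∀ x y,
      Matrix.vecMulVec (ψ y) (star (ψ y)) * Matrix.vecMulVec (φ x) (star (φ x)) * ρ *
        Matrix.vecMulVec (φ x) (star (φ x)) * Matrix.vecMulVec (ψ y) (star (ψ y))
      = lam x y • Matrix.vecMulVec (ψ y) (star (ψ y))) := by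
  -- notation
  set P : ΩA → Matrix n n ℂ := fun x => Matrix.vecMulVec (φ x) (star (φ x)) with hP
  set Q : ΩB → Matrix n n ℂ := fun y => Matrix.vecMulVec (ψ y) (star (ψ y)) with hQ
  -- conjugate inner product
  have hstar : ∀ x y, star (ψ y) ⬝ᵥ φ x = star (star (φ x) ⬝ᵥ ψ y) := by
    intro x y
    rw [Matrix.star_dotProduct]
  have hcc : ∀ x y, (star (φ x) ⬝ᵥ ψ y) * (star (ψ y) ⬝ᵥ φ x)
      = ((‖star (φ x) ⬝ᵥ ψ y‖ ^ 2 : ℝ) : ℂ) := by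
    intro x y
    rw [hstar]
    push_cast
    exact Complex.mul_conj' _
  have hccomm : ∀ x y, (star (ψ y) ⬝ᵥ φ x) * (star (φ x) ⬝ᵥ ψ y)
      = ((‖star (φ x) ⬝ᵥ ψ y‖ ^ 2 : ℝ) : ℂ) := by
    intro x y; rw [mul_comm]; exact hcc x y
  -- trace formulas
  have htraceQP : ∀ x y, (Q y * P x).trace = ((‖star (φ x) ⬝ᵥ ψ y‖ ^ 2 : ℝ) : ℂ) := by
    intro x y
    rw [hQ, hP]
    rw [vmv_mul_vmv, Matrix.trace_smul, trace_vmv, smul_eq_mul, mul_comm]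
    exact hcc x y
  have htracePρ : ∀ x, (P x * ρ).trace = star (φ x) ⬝ᵥ ρ *ᵥ φ x := by
    intro x; rw [hP]; exact trace_vmv_mul _ _ _
  -- row sums
  have hrow : ∀ x, ∑ y, lam x y = star (φ x) ⬝ᵥ ρ *ᵥ φ x := by
    intro x
    have : ∀ y, lam x y = (Q y * P x).trace * (star (φ x) ⬝ᵥ ρ *ᵥ φ x) := by
      intro y; rw [hlam, htraceQP]
    have h1 : ∑ y, (Q y * P x).trace = 1 := by
      rw [← Matrix.trace_sum, ← Finset.sum_mul, hBsum, one_mul, hP, trace_vmv, hφ]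
    rw [Finset.sum_congr rfl fun y _ => this y, ← Finset.sum_mul, h1, one_mul]
  have hsum : ∑ x, ∑ y, lam x y = 1 := by
    rw [Finset.sum_congr rfl fun x _ => hrow x]
    have : ∀ x, star (φ x) ⬝ᵥ ρ *ᵥ φ x = (P x * ρ).trace := fun x => (htracePρ x).symm
    rw [Finset.sum_congr rfl fun x _ => this x, ← Matrix.trace_sum, ← Finset.sum_mul, hAsum,
      one_mul, hρtr]
  -- nonnegativity
  have hnonneg : ∀ x y, 0 ≤ lam x y := by
    intro x y
    rw [hlam]
    exact mul_nonneg (Complex.zero_le_real.2 (by positivity)) (hρ.dotProduct_mulVec_nonneg (φ x))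
  have hle_one : ∀ x y, lam x y ≤ 1 := by
    intro x y
    calc lam x y ≤ ∑ y, lam x y :=
          Finset.single_le_sum (fun y _ => hnonneg x y) (Finset.mem_univ y)
      _ ≤ ∑ x, ∑ y, lam x y :=
          Finset.single_le_sum (fun x _ => Finset.sum_nonneg fun y _ => hnonneg x y)
            (Finset.mem_univ x)
      _ = 1 := hsum
  refine ⟨?_, hsum, ?_, ?_⟩
  · intro x y
    obtain ⟨h1, h2⟩ := Complex.le_def.1 (hnonneg x y)
    obtain ⟨h3, _⟩ := Complex.le_def.1 (hle_one x y)
    exact ⟨h1, by simpa using h3, by simpa using h2.symm⟩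
  · -- Lüders instrument of A ∘ B
    intro x y
    have hPsqrt : (vecMulVec_star_self_posSemidef (φ x)).sqrt = P x := sqrt_proj (φ x) (hφ x)
    have hS : seqProd (vecMulVec_star_self_posSemidef (φ x))
        (Matrix.vecMulVec (ψ y) (star (ψ y)))
        = ((‖star (φ x) ⬝ᵥ ψ y‖ ^ 2 : ℝ) : ℂ) • P x := by
      rw [seqProd, hPsqrt]
      rw [hP, vmv_mul_vmv, Matrix.smul_mul, vmv_mul_vmv, smul_smul, hcc]
    have hPP : P x * P x = P x := by
      rw [hP, vmv_mul_vmv, hφ, one_smul]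
    have hSsqrt : (seqProd_posSemidef (vecMulVec_star_self_posSemidef (φ x))
        (vecMulVec_star_self_posSemidef (ψ y))).sqrt
        = ((‖star (φ x) ⬝ᵥ ψ y‖ : ℝ) : ℂ) • P x := by
      symm
      refine Matrix.PosSemidef.eq_sqrt_of_sq_eq
        (psd_real_smul (vecMulVec_star_self_posSemidef (φ x)) (norm_nonneg _)) _ ?_
      rw [pow_two, Matrix.smul_mul, Matrix.mul_smul, smul_smul, hPP, hS]
      push_cast
      ring_nf
    rw [hSsqrt]
    simp only [Matrix.smul_mul, Matrix.mul_smul, smul_smul, hP]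
    rw [vmv_mul_mat_mul_vmv, smul_smul, hlam]
    congr 1
    push_cast
    ring
  · -- composition of Lüders instruments
    intro x y
    have hPρP : P x * ρ * P x = (star (φ x) ⬝ᵥ ρ *ᵥ φ x) • P x := by
      rw [hP]; exact vmv_mul_mat_mul_vmv _ _ _ _ _
    have hassoc : Q y * P x * ρ * P x * Q y = Q y * (P x * ρ * P x) * Q y := by
      simp only [mul_assoc]
    rw [hassoc, hPρP, Matrix.mul_smul, Matrix.smul_mul, hQ, hP, vmv_mul_vmv, Matrix.smul_mul,
      vmv_mul_vmv, smul_smul, smul_smul, hlam]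
    congr 1
    rw [mul_assoc, hccomm]
    ring
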